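/- Let ζ : (0,1] → ℝ be continuous with 0 < k₁ ≤ ζ(s) ≤ k₂, define a(s) = exp(−∫_s^1 ζ(τ)/τ dτ) and I(s) = ∫_s^1 t^{−1} exp(∫_t^1 ζ(τ)/τ dτ) dt. Then limsup_{s→0} a(s)·I(s) ≤ 1/k₁; in particular if ζ(s) → ℓ as s → 0 then a(s)I(s) → 1/ℓ. -/

import Mathlib

open Real Filter intervalIntegral
open Set MeasureTheory

noncomputable def Fz (ζ : ℝ → ℝ) (s : ℝ) : ℝ := ∫ τ in s..1, ζ τ / τ
noncomputable def Ez (ζ : ℝ → ℝ) (t : ℝ) : ℝ := Real.exp (Fz ζ t)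
noncomputable def Iz (ζ : ℝ → ℝ) (s : ℝ) : ℝ := ∫ t in s..1, t⁻¹ * Ez ζ t

variable {ζ : ℝ → ℝ}

lemma hg_cont (hζc : ContinuousOn ζ (Set.Ioc 0 1)) :
    ContinuousOn (fun τ => ζ τ / τ) (Set.Ioc 0 1) :=
  hζc.div (continuousOn_id) (fun t ht => ne_of_gt ht.1)

lemma g_int (hζc : ContinuousOn ζ (Set.Ioc 0 1)) {a b : ℝ} (ha : 0 < a) (hab : a ≤ b)
    (hb1 : b ≤ 1) : IntervalIntegrable (fun τ => ζ τ / τ) volume a b := by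
  apply ((hg_cont hζc).mono _).intervalIntegrable
  rw [uIcc_of_le hab]
  exact fun x hx => ⟨lt_of_lt_of_le ha hx.1, le_trans hx.2 hb1⟩

lemma F_deriv (hζc : ContinuousOn ζ (Set.Ioc 0 1)) {x : ℝ} (hx : x ∈ Set.Ioo (0:ℝ) 1) :
    HasDerivAt (Fz ζ) (-(ζ x / x)) x := by
  apply intervalIntegral.integral_hasDerivAt_left (g_int hζc hx.1 hx.2.le le_rfl)
  · refine ⟨Set.Ioo 0 1, Ioo_mem_nhds hx.1 hx.2, ?_⟩
    exact ((hg_cont hζc).mono Ioo_subset_Ioc_self).aestronglyMeasurable measurableSet_Ioo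
  · exact (hg_cont hζc).continuousAt (Ioc_mem_nhds hx.1 hx.2)

lemma F_cont (hζc : ContinuousOn ζ (Set.Ioc 0 1)) : ContinuousOn (Fz ζ) (Set.Ioc 0 1) := by
  intro x hx
  have ha : 0 < x / 2 := by linarith [hx.1]
  have hax : x / 2 < x := by linarith [hx.1]
  have h1 : (x/2 : ℝ) ≤ 1 := by linarith [hx.2]
  have hIcc : Set.Icc (x/2) 1 ⊆ Set.Ioc 0 1 := fun y hy => ⟨lt_of_lt_of_le ha hy.1, hy.2⟩
  have hint : IntegrableOn (fun τ => ζ τ / τ) (Set.uIcc (x/2) 1) volume := by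
    rw [uIcc_of_le h1]
    exact ((hg_cont hζc).mono hIcc).integrableOn_compact isCompact_Icc
  have hc : ContinuousOn (Fz ζ) (Set.uIcc (x/2) 1) :=
    intervalIntegral.continuousOn_primitive_interval_left hint
  rw [uIcc_of_le h1] at hc
  have hcx : ContinuousWithinAt (Fz ζ) (Set.Icc (x/2) 1) x := hc x ⟨hax.le, hx.2⟩
  apply hcx.mono_of_mem_nhdsWithin
  apply mem_nhdsWithin.mpr ⟨Set.Ioi (x/2), isOpen_Ioi, hax, ?_⟩
  exact fun y hy => ⟨hy.1.le, hy.2.2⟩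

lemma E_pos (t : ℝ) : 0 < Ez ζ t := Real.exp_pos _

lemma h_cont (hζc : ContinuousOn ζ (Set.Ioc 0 1)) :
    ContinuousOn (fun t => t⁻¹ * Ez ζ t) (Set.Ioc 0 1) := by
  apply ContinuousOn.mul
  · exact continuousOn_id.inv₀ (fun t ht => ne_of_gt ht.1)
  · exact (F_cont hζc).rexp

lemma h_int (hζc : ContinuousOn ζ (Set.Ioc 0 1)) {a b : ℝ} (ha : 0 < a) (hab : a ≤ b)
    (hb1 : b ≤ 1) : IntervalIntegrable (fun t => t⁻¹ * Ez ζ t) volume a b := by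
  apply ((h_cont hζc).mono _).intervalIntegrable
  rw [uIcc_of_le hab]
  exact fun x hx => ⟨lt_of_lt_of_le ha hx.1, le_trans hx.2 hb1⟩

lemma gE_int (hζc : ContinuousOn ζ (Set.Ioc 0 1)) {a b : ℝ} (ha : 0 < a) (hab : a ≤ b)
    (hb1 : b ≤ 1) : IntervalIntegrable (fun t => ζ t / t * Ez ζ t) volume a b := by
  apply (((hg_cont hζc).mul (F_cont hζc).rexp).mono _).intervalIntegrable
  rw [uIcc_of_le hab]
  exact fun x hx => ⟨lt_of_lt_of_le ha hx.1, le_trans hx.2 hb1⟩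

lemma ftc (hζc : ContinuousOn ζ (Set.Ioc 0 1)) {s δ : ℝ} (hs : 0 < s) (hsδ : s ≤ δ)
    (hδ1 : δ ≤ 1) : ∫ t in s..δ, ζ t / t * Ez ζ t = Ez ζ s - Ez ζ δ := by
  have hIcc : Set.Icc s δ ⊆ Set.Ioc 0 1 := fun y hy => ⟨lt_of_lt_of_le hs hy.1, hy.2.trans hδ1⟩
  have := intervalIntegral.integral_eq_sub_of_hasDeriv_right_of_le hsδ
    (f := fun t => -Ez ζ t) (f' := fun t => ζ t / t * Ez ζ t) ?_ ?_
    (gE_int hζc hs hsδ hδ1)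
  · rw [this]; ring
  · exact (((F_cont hζc).rexp).mono hIcc).neg
  · intro x hx
    have hx' : x ∈ Set.Ioo (0:ℝ) 1 := ⟨lt_of_lt_of_le hs hx.1.le, lt_of_lt_of_le hx.2 hδ1⟩
    have hd : HasDerivAt (fun t => -Ez ζ t) (ζ x / x * Ez ζ x) x := by
      have := ((F_deriv hζc hx').exp).neg
      refine HasDerivAt.congr_deriv this ?_
      simp only [Ez]; ring
    exact hd.hasDerivWithinAt

lemma key (hζc : ContinuousOn ζ (Set.Ioc 0 1)) {m M δ s : ℝ} (hm : 0 < m) (hs : 0 < s)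
    (hsδ : s ≤ δ) (hδ1 : δ ≤ 1) (hb : ∀ t ∈ Set.Ioc (0:ℝ) δ, m ≤ ζ t ∧ ζ t ≤ M) :
    (Ez ζ s)⁻¹ * Iz ζ δ + 1/M * (1 - Ez ζ δ * (Ez ζ s)⁻¹) ≤ (Ez ζ s)⁻¹ * Iz ζ s ∧
    (Ez ζ s)⁻¹ * Iz ζ s ≤ (Ez ζ s)⁻¹ * Iz ζ δ + 1/m * (1 - Ez ζ δ * (Ez ζ s)⁻¹) := by
  have hδ0 : 0 < δ := lt_of_lt_of_le hs hsδ
  have hM : 0 < M := lt_of_lt_of_le hm (le_trans (hb δ ⟨hδ0, le_rfl⟩).1 (hb δ ⟨hδ0, le_rfl⟩).2)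
  have hsplit : Iz ζ s = (∫ t in s..δ, t⁻¹ * Ez ζ t) + Iz ζ δ :=
    (intervalIntegral.integral_add_adjacent_intervals (h_int hζc hs hsδ hδ1)
      (h_int hζc hδ0 hδ1 le_rfl)).symm
  have hIcc : ∀ x ∈ Set.Icc s δ, x ∈ Set.Ioc (0:ℝ) 1 :=
    fun y hy => ⟨lt_of_lt_of_le hs hy.1, hy.2.trans hδ1⟩
  have hub : ∀ x ∈ Set.Icc s δ, x⁻¹ * Ez ζ x ≤ 1/m * (ζ x / x * Ez ζ x) := by
    intro x hx
    have hx0 : 0 < x := (hIcc x hx).1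
    have hζx : m ≤ ζ x := (hb x ⟨hx0, hx.2⟩).1
    have hu : 0 ≤ x⁻¹ * Ez ζ x := mul_nonneg (inv_nonneg.mpr hx0.le) (E_pos x).le
    have h1 : ζ x / x * Ez ζ x = ζ x * (x⁻¹ * Ez ζ x) := by rw [div_eq_mul_inv]; ring
    rw [h1, one_div]
    have h2 := mul_le_mul_of_nonneg_right hζx hu
    calc x⁻¹ * Ez ζ x = m⁻¹ * (m * (x⁻¹ * Ez ζ x)) := by field_simp
      _ ≤ m⁻¹ * (ζ x * (x⁻¹ * Ez ζ x)) :=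
          mul_le_mul_of_nonneg_left h2 (by positivity)
  have hlb : ∀ x ∈ Set.Icc s δ, 1/M * (ζ x / x * Ez ζ x) ≤ x⁻¹ * Ez ζ x := by
    intro x hx
    have hx0 : 0 < x := (hIcc x hx).1
    have hζx : ζ x ≤ M := (hb x ⟨hx0, hx.2⟩).2
    have hu : 0 ≤ x⁻¹ * Ez ζ x := mul_nonneg (inv_nonneg.mpr hx0.le) (E_pos x).le
    have h1 : ζ x / x * Ez ζ x = ζ x * (x⁻¹ * Ez ζ x) := by rw [div_eq_mul_inv]; ring
    rw [h1, one_div]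
    have h2 := mul_le_mul_of_nonneg_right hζx hu
    calc M⁻¹ * (ζ x * (x⁻¹ * Ez ζ x)) ≤ M⁻¹ * (M * (x⁻¹ * Ez ζ x)) :=
          mul_le_mul_of_nonneg_left h2 (by positivity)
      _ = x⁻¹ * Ez ζ x := by field_simp
  have hmid_ub : (∫ t in s..δ, t⁻¹ * Ez ζ t) ≤ 1/m * (Ez ζ s - Ez ζ δ) := by
    calc (∫ t in s..δ, t⁻¹ * Ez ζ t) ≤ ∫ t in s..δ, 1/m * (ζ t / t * Ez ζ t) :=
          intervalIntegral.integral_mono_on hsδ (h_int hζc hs hsδ hδ1)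
            ((gE_int hζc hs hsδ hδ1).const_mul _) hub
      _ = 1/m * (Ez ζ s - Ez ζ δ) := by
          rw [intervalIntegral.integral_const_mul, ftc hζc hs hsδ hδ1]
  have hmid_lb : 1/M * (Ez ζ s - Ez ζ δ) ≤ ∫ t in s..δ, t⁻¹ * Ez ζ t := by
    calc 1/M * (Ez ζ s - Ez ζ δ) = ∫ t in s..δ, 1/M * (ζ t / t * Ez ζ t) := by
          rw [intervalIntegral.integral_const_mul, ftc hζc hs hsδ hδ1]
      _ ≤ ∫ t in s..δ, t⁻¹ * Ez ζ t :=
          intervalIntegral.integral_mono_on hsδ ((gE_int hζc hs hsδ hδ1).const_mul _)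
            (h_int hζc hs hsδ hδ1) hlb
  have hA : 0 < (Ez ζ s)⁻¹ := inv_pos.mpr (E_pos s)
  have hAE : (Ez ζ s)⁻¹ * Ez ζ s = 1 := inv_mul_cancel₀ (E_pos s).ne'
  have heqm : (Ez ζ s)⁻¹ * (1/m * (Ez ζ s - Ez ζ δ)) = 1/m * (1 - Ez ζ δ * (Ez ζ s)⁻¹) := by
    have h4 : (Ez ζ s)⁻¹ * (1/m * (Ez ζ s - Ez ζ δ))
        = 1/m * ((Ez ζ s)⁻¹ * Ez ζ s - Ez ζ δ * (Ez ζ s)⁻¹) := by ring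
    rw [h4, hAE]
  have heqM : (Ez ζ s)⁻¹ * (1/M * (Ez ζ s - Ez ζ δ)) = 1/M * (1 - Ez ζ δ * (Ez ζ s)⁻¹) := by
    have h4 : (Ez ζ s)⁻¹ * (1/M * (Ez ζ s - Ez ζ δ))
        = 1/M * ((Ez ζ s)⁻¹ * Ez ζ s - Ez ζ δ * (Ez ζ s)⁻¹) := by ring
    rw [h4, hAE]
  constructor
  · rw [hsplit]
    have h3 := mul_le_mul_of_nonneg_left hmid_lb hA.le
    rw [heqM] at h3
    nlinarith [h3]
  · rw [hsplit]
    have h3 := mul_le_mul_of_nonneg_left hmid_ub hA.le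
    rw [heqm] at h3
    nlinarith [h3]

lemma A_tendsto (hζc : ContinuousOn ζ (Set.Ioc 0 1)) {k₁ : ℝ} (hk₁ : 0 < k₁)
    (hζb : ∀ s ∈ Set.Ioc (0:ℝ) 1, k₁ ≤ ζ s) :
    Tendsto (fun s => (Ez ζ s)⁻¹) (nhdsWithin 0 (Set.Ioi 0)) (nhds 0) := by
  have hbd : ∀ s ∈ Set.Ioo (0:ℝ) 1, (Ez ζ s)⁻¹ ≤ Real.exp (k₁ * Real.log s) := by
    intro s hs
    have hF : k₁ * (-Real.log s) ≤ Fz ζ s := by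
      have h0 : (0:ℝ) ∉ Set.uIcc s 1 := by
        rw [uIcc_of_le hs.2.le]
        exact fun h => absurd h.1 (not_le.mpr hs.1)
      have hint1 : IntervalIntegrable (fun τ => k₁ * τ⁻¹) volume s 1 := by
        have hci : ContinuousOn (fun τ : ℝ => τ⁻¹) (Set.uIcc s 1) := by
          apply continuousOn_id.inv₀
          rw [uIcc_of_le hs.2.le]
          exact fun x hx => ne_of_gt (lt_of_lt_of_le hs.1 hx.1)
        exact hci.intervalIntegrable.const_mul k₁
      have hmono := intervalIntegral.integral_mono_on hs.2.le hint1
        (g_int hζc hs.1 hs.2.le le_rfl) (fun x hx => ?_)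
      · calc k₁ * (-Real.log s) = ∫ τ in s..1, k₁ * τ⁻¹ := by
              rw [intervalIntegral.integral_const_mul, integral_inv h0, one_div, Real.log_inv]
          _ ≤ Fz ζ s := hmono
      · have hx0 : 0 < x := lt_of_lt_of_le hs.1 hx.1
        have := hζb x ⟨hx0, hx.2⟩
        rw [div_eq_mul_inv]
        exact mul_le_mul_of_nonneg_right this (inv_nonneg.mpr hx0.le)
    have hE : Real.exp (k₁ * (-Real.log s)) ≤ Ez ζ s := Real.exp_le_exp.mpr hF
    calc (Ez ζ s)⁻¹ ≤ (Real.exp (k₁ * (-Real.log s)))⁻¹ := by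
          apply inv_anti₀ (Real.exp_pos _) hE
      _ = Real.exp (k₁ * Real.log s) := by rw [← Real.exp_neg]; ring_nf
  have hexp : Tendsto (fun s => Real.exp (k₁ * Real.log s)) (nhdsWithin 0 (Set.Ioi 0)) (nhds 0) := by
    apply Real.tendsto_exp_atBot.comp
    exact (Real.tendsto_log_nhdsGT_zero).const_mul_atBot hk₁
  apply tendsto_of_tendsto_of_tendsto_of_le_of_le' tendsto_const_nhds hexp
  · exact Eventually.of_forall (fun s => inv_nonneg.mpr (E_pos s).le)
  · filter_upwards [Ioo_mem_nhdsGT (by norm_num : (0:ℝ) < 1)] with s hs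
    exact hbd s hs

/-- Logarithmic-weight example: for continuous `ζ` with `0 < k₁ ≤ ζ ≤ k₂`,
`a(s) = exp(−∫_s^1 ζ(τ)/τ dτ)` and
`I(s) = ∫_s^1 t⁻¹ exp(∫_t^1 ζ(τ)/τ dτ) dt`, one has
`limsup_{s→0⁺} a(s) I(s) ≤ 1/k₁`; and if `ζ(s) → ℓ` as `s → 0⁺`, then
`a(s) I(s) → 1/ℓ`. -/
theorem stmt15 (ζ : ℝ → ℝ) (k₁ k₂ : ℝ) (hk₁ : 0 < k₁)
    (hζc : ContinuousOn ζ (Set.Ioc 0 1))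
    (hζb : ∀ s ∈ Set.Ioc (0 : ℝ) 1, k₁ ≤ ζ s ∧ ζ s ≤ k₂) :
    Filter.limsup
        (fun s : ℝ =>
          Real.exp (-(∫ τ in s..1, ζ τ / τ)) *
            ∫ t in s..1, t⁻¹ * Real.exp (∫ τ in t..1, ζ τ / τ))
        (nhdsWithin 0 (Set.Ioi 0)) ≤ 1 / k₁ ∧
      ∀ ℓ : ℝ, Tendsto ζ (nhdsWithin 0 (Set.Ioi 0)) (nhds ℓ) →
        Tendsto
          (fun s : ℝ =>
            Real.exp (-(∫ τ in s..1, ζ τ / τ)) *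
              ∫ t in s..1, t⁻¹ * Real.exp (∫ τ in t..1, ζ τ / τ))
          (nhdsWithin 0 (Set.Ioi 0)) (nhds (1 / ℓ)) := by
  have hfun : (fun s : ℝ =>
      Real.exp (-(∫ τ in s..1, ζ τ / τ)) *
        ∫ t in s..1, t⁻¹ * Real.exp (∫ τ in t..1, ζ τ / τ))
      = fun s => (Ez ζ s)⁻¹ * Iz ζ s := by
    funext s
    rw [Real.exp_neg]
    rfl
  rw [hfun]
  set L := nhdsWithin (0:ℝ) (Set.Ioi 0) with hL
  set f : ℝ → ℝ := fun s => (Ez ζ s)⁻¹ * Iz ζ s with hf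
  have hmem : Set.Ioo (0:ℝ) 1 ∈ L := Ioo_mem_nhdsGT one_pos
  have hE1 : Ez ζ 1 = 1 := by simp [Ez, Fz]
  have hI1 : Iz ζ 1 = 0 := intervalIntegral.integral_same
  have ev_ub : ∀ᶠ s in L, f s ≤ 1/k₁ := by
    filter_upwards [hmem] with s hs
    have hk := (key hζc hk₁ hs.1 hs.2.le le_rfl hζb).2
    rw [hE1, hI1] at hk
    have hA : 0 ≤ (Ez ζ s)⁻¹ := inv_nonneg.mpr (E_pos s).le
    have h1k : 0 ≤ 1/k₁ := by positivity
    show (Ez ζ s)⁻¹ * Iz ζ s ≤ 1/k₁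
    nlinarith [mul_nonneg h1k hA]
  have ev_lb : ∀ᶠ s in L, 0 ≤ f s := by
    filter_upwards [hmem] with s hs
    apply mul_nonneg (inv_nonneg.mpr (E_pos s).le)
    apply intervalIntegral.integral_nonneg hs.2.le
    intro u hu
    exact mul_nonneg (inv_nonneg.mpr (le_trans hs.1.le hu.1)) (E_pos u).le
  have hbddU : IsBoundedUnder (· ≤ ·) L f := isBoundedUnder_of_eventually_le ev_ub
  have hbddL : IsBoundedUnder (· ≥ ·) L f := isBoundedUnder_of_eventually_ge ev_lb
  have hcobU : IsCoboundedUnder (· ≤ ·) L f := hbddL.isCoboundedUnder_le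
  have hcobL : IsCoboundedUnder (· ≥ ·) L f := hbddU.isCoboundedUnder_ge
  have hAt : Tendsto (fun s => (Ez ζ s)⁻¹) L (nhds 0) :=
    A_tendsto hζc hk₁ (fun s hs => (hζb s hs).1)
  constructor
  · exact Filter.limsup_le_of_le hcobU ev_ub
  · intro ℓ hℓt
    have hℓ : k₁ ≤ ℓ := by
      apply ge_of_tendsto hℓt
      filter_upwards [hmem] with s hs
      exact (hζb s ⟨hs.1, hs.2.le⟩).1
    have hℓ0 : 0 < ℓ := lt_of_lt_of_le hk₁ hℓ
    apply tendsto_of_le_liminf_of_limsup_le _ _ hbddU hbddL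
    · -- 1/ℓ ≤ liminf
      apply le_of_forall_lt
      intro c hc
      have hmax : max c 0 < 1/ℓ := max_lt hc (by positivity)
      obtain ⟨b', hb'1, hb'2⟩ := exists_between hmax
      have hb'0 : 0 < b' := lt_of_le_of_lt (le_max_right c 0) hb'1
      have hcb' : c < b' := lt_of_le_of_lt (le_max_left c 0) hb'1
      set M := 1/b' with hM
      have hM0 : 0 < M := by positivity
      have hℓM : ℓ < M := by
        rw [hM, lt_one_div hℓ0 hb'0] at *
        exact hb'2
      have hev : {t | ζ t < M} ∈ L := hℓt (Iio_mem_nhds hℓM)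
      obtain ⟨u, hu0, hsub⟩ := mem_nhdsGT_iff_exists_Ioc_subset.mp hev
      set δ := min u 1 with hδ
      have hδ0 : 0 < δ := lt_min hu0 one_pos
      have hδ1 : δ ≤ 1 := min_le_right _ _
      have hb : ∀ t ∈ Set.Ioc (0:ℝ) δ, k₁ ≤ ζ t ∧ ζ t ≤ M := by
        intro t ht
        refine ⟨(hζb t ⟨ht.1, ht.2.trans hδ1⟩).1, le_of_lt (hsub ⟨ht.1, ht.2.trans (min_le_left _ _)⟩)⟩
      set R : ℝ → ℝ := fun s => (Ez ζ s)⁻¹ * Iz ζ δ + 1/M * (1 - Ez ζ δ * (Ez ζ s)⁻¹) with hR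
      have hRt : Tendsto R L (nhds b') := by
        have : Tendsto R L (nhds (0 * Iz ζ δ + 1/M * (1 - Ez ζ δ * 0))) := by
          exact (hAt.mul_const _).add ((tendsto_const_nhds.sub (hAt.const_mul _)).const_mul _)
        convert this using 2
        rw [hM]
        field_simp
        ring
      have hevR : ∀ᶠ s in L, R s ≤ f s := by
        filter_upwards [Ioo_mem_nhdsGT hδ0] with s hs
        exact (key hζc hk₁ hs.1 hs.2.le hδ1 hb).1
      calc c < b' := hcb'
        _ = liminf R L := (hRt.liminf_eq).symm
        _ ≤ liminf f L := liminf_le_liminf hevR hRt.isBoundedUnder_ge hcobL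
    · -- limsup ≤ 1/ℓ
      apply le_of_forall_gt_imp_ge_of_dense
      intro c hc
      have hc0 : 0 < c := lt_trans (by positivity) hc
      set m := 1/c with hm
      have hm0 : 0 < m := by positivity
      have hmℓ : m < ℓ := by
        rw [hm, one_div_lt hc0 hℓ0]
        exact hc
      have hev : {t | m < ζ t} ∈ L := hℓt (Ioi_mem_nhds hmℓ)
      obtain ⟨u, hu0, hsub⟩ := mem_nhdsGT_iff_exists_Ioc_subset.mp hev
      set δ := min u 1 with hδ
      have hδ0 : 0 < δ := lt_min hu0 one_pos
      have hδ1 : δ ≤ 1 := min_le_right _ _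
      have hb : ∀ t ∈ Set.Ioc (0:ℝ) δ, m ≤ ζ t ∧ ζ t ≤ k₂ := by
        intro t ht
        exact ⟨le_of_lt (hsub ⟨ht.1, ht.2.trans (min_le_left _ _)⟩),
          (hζb t ⟨ht.1, ht.2.trans hδ1⟩).2⟩
      set R : ℝ → ℝ := fun s => (Ez ζ s)⁻¹ * Iz ζ δ + 1/m * (1 - Ez ζ δ * (Ez ζ s)⁻¹) with hR
      have hRt : Tendsto R L (nhds c) := by
        have : Tendsto R L (nhds (0 * Iz ζ δ + 1/m * (1 - Ez ζ δ * 0))) := by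
          exact (hAt.mul_const _).add ((tendsto_const_nhds.sub (hAt.const_mul _)).const_mul _)
        convert this using 2
        rw [hm]
        field_simp
        ring
      have hevR : ∀ᶠ s in L, f s ≤ R s := by
        filter_upwards [Ioo_mem_nhdsGT hδ0] with s hs
        exact (key hζc hm0 hs.1 hs.2.le hδ1 hb).2
      calc limsup f L ≤ limsup R L := limsup_le_limsup hevR hcobU hRt.isBoundedUnder_le
        _ = c := hRt.limsup_eq
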